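/- Let q = 2^h, let α ∈ GF(q) with Tr(α) = 1, and let A be an additive subgroup of GF(q) with |A| ≥ 2. Then {(0,0,1)} ∪ ⋃_{λ ∈ A\{0}} F_{α,1,λ} is a maximal arc of degree |A| in PG(2,q), i.e. every line of PG(2,q) meets this set in exactly 0 or |A| points. -/

import Mathlib

open scoped Classical

noncomputable section

namespace MaxArc

variable (F : Type) [Field F] [Fintype F]

/-- The absolute trace map of `GF(2^h)` over `GF(2)`, valued in the field itself
(the prime subfield is identified with `{0,1}`). -/
def tr (h : ℕ) (x : F) : F := ∑ i ∈ Finset.range h, x ^ 2 ^ i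

/-- The points of `PG(2,q)`. -/
abbrev Pt := Projectivization F (Fin 3 → F)

/-- The conic `F_{α,β,λ} = {(x,y,z) : α x² + x y + β y² + λ z² = 0}` of `PG(2,q)`.
(The defining equation is homogeneous, so evaluating at the chosen representative
is independent of the choice.) -/
def conicSet (a b l : F) : Set (Pt F) :=
  {P | a * P.rep 0 ^ 2 + P.rep 0 * P.rep 1 + b * P.rep 1 ^ 2 + l * P.rep 2 ^ 2 = 0}

/-- The lines of `PG(2,q)`: zero sets of nonzero linear forms. -/
def IsLine (L : Set (Pt F)) : Prop :=
  ∃ u v w : F, ¬(u = 0 ∧ v = 0 ∧ w = 0) ∧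
    L = {P | u * P.rep 0 + v * P.rep 1 + w * P.rep 2 = 0}

/-- A maximal arc of degree `d`: a nonempty proper set of points met by every line
in exactly `0` or `d` points. -/
def IsMaximalArc (K : Set (Pt F)) (d : ℕ) : Prop :=
  K.Nonempty ∧ K ≠ Set.univ ∧
    ∀ L : Set (Pt F), IsLine F L → (K ∩ L).ncard = 0 ∨ (K ∩ L).ncard = d

/-- The point `(0,0,1)` of `PG(2,q)`. -/
def pt001 : Pt F := Projectivization.mk F ![0, 0, 1] (by
  intro hc
  have h2 := congrFun hc 2
  simp at h2)

/-- A collineation of `PG(2,q)`: the permutation of the point set induced by an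
invertible `σ`-semilinear map of `F³` (written as an invertible matrix composed
with a field automorphism `σ`). -/
def IsCollineation (g : Pt F → Pt F) : Prop :=
  ∃ σ : F ≃+* F, ∃ M : Matrix (Fin 3) (Fin 3) F, IsUnit M.det ∧
    ∀ (v : Fin 3 → F) (hv : v ≠ 0) (hv' : M.mulVec (fun i => σ (v i)) ≠ 0),
      g (Projectivization.mk F v hv) = Projectivization.mk F (M.mulVec (fun i => σ (v i))) hv'

/-- A closed set of conics `{F_{a(λ), b(λ), λ} : λ ∈ Λ}` in `PG(2,q)`, `q = 2^h`. -/
def IsClosedConicSet (h : ℕ) (Λ : Finset F) (a b : F → F) : Prop :=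
  (0 : F) ∉ Λ ∧ (∀ l ∈ Λ, tr F h (a l * b l) = 1) ∧
    ∀ l ∈ Λ, ∀ l' ∈ Λ, l ≠ l' →
      l + l' ∈ Λ ∧ a (l + l') = (a l * l + a l' * l') / (l + l') ∧
        b (l + l') = (b l * l + b l' * l') / (l + l')

/-- The point set of a (Mathon) arc obtained from a family of conics: the union of
the conics together with the common nucleus `(0,0,1)`. -/
def mathonSet (Λ : Finset F) (a b : F → F) : Set (Pt F) :=
  {pt001 F} ∪ ⋃ l ∈ Λ, conicSet F (a l) (b l) l

/-- The Denniston point set determined by `α` and a set `A ⊆ GF(q)`. -/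
def dennistonSet (a : F) (A : Set F) : Set (Pt F) :=
  {pt001 F} ∪ ⋃ l ∈ A \ {0}, conicSet F a 1 l

/-- A degree 4 maximal arc of Denniston type: the image under a collineation of
`{(0,0,1)} ∪ ⋃_{λ ∈ A \ {0}} F_{α,1,λ}` with `Tr(α) = 1` and `A` an additive
subgroup of order 4. -/
def IsDenniston4 (h : ℕ) (K : Set (Pt F)) : Prop :=
  ∃ a : F, tr F h a = 1 ∧ ∃ A : AddSubgroup F, Nat.card A = 4 ∧
    ∃ g : Pt F → Pt F, IsCollineation F g ∧ g '' dennistonSet F a (A : Set F) = K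

/-- `C` is a nondegenerate conic of `PG(2,q)` with nucleus `n`: the zero set of a
nonzero quadratic form, consisting of exactly `q+1` points no three of which are
collinear, all of whose tangent lines pass through `n`. -/
def IsConicWithNucleus (C : Set (Pt F)) (n : Pt F) : Prop :=
  (∃ a b c d e f : F, ¬(a = 0 ∧ b = 0 ∧ c = 0 ∧ d = 0 ∧ e = 0 ∧ f = 0) ∧
      C = {P | a * P.rep 0 ^ 2 + b * P.rep 1 ^ 2 + c * P.rep 2 ^ 2 +
        d * P.rep 0 * P.rep 1 + e * P.rep 0 * P.rep 2 + f * P.rep 1 * P.rep 2 = 0}) ∧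
    C.ncard = Fintype.card F + 1 ∧
    (∀ L : Set (Pt F), IsLine F L → (C ∩ L).ncard ≤ 2) ∧
    (∀ L : Set (Pt F), IsLine F L → (C ∩ L).ncard = 1 → n ∈ L)

/-- A maximal arc of degree `d` of Mathon type in `PG(2,q)`, `q = 2^h`. -/
def IsMathonType (h : ℕ) (K : Set (Pt F)) (d : ℕ) : Prop :=
  IsMaximalArc F K d ∧
    ∃ g : Pt F → Pt F, IsCollineation F g ∧ ∃ (Λ : Finset F) (a b : F → F),
      IsClosedConicSet F h Λ a b ∧ Λ.card + 1 = d ∧ g '' K = mathonSet F Λ a b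

/-- A maximal arc of degree `d` of Mathon type in `PG(2,q)` with nucleus `n`
(the preimage of `(0,0,1)` under a collineation realizing the Mathon description). -/
def IsMathonWithNucleus (h : ℕ) (K : Set (Pt F)) (d : ℕ) (n : Pt F) : Prop :=
  IsMaximalArc F K d ∧
    ∃ g : Pt F → Pt F, IsCollineation F g ∧ g n = pt001 F ∧
      ∃ (Λ : Finset F) (a b : F → F),
        IsClosedConicSet F h Λ a b ∧ Λ.card + 1 = d ∧ g '' K = mathonSet F Λ a b

/-- A maximal arc of Denniston type: Mathon type where the closed set of conics can
be chosen with `α` and `β` constant. -/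
def IsDennistonType (h : ℕ) (K : Set (Pt F)) : Prop :=
  ∃ g : Pt F → Pt F, IsCollineation F g ∧ ∃ (a b : F) (Λ : Finset F),
    IsClosedConicSet F h Λ (fun _ => a) (fun _ => b) ∧
    g '' K = mathonSet F Λ (fun _ => a) (fun _ => b)

/-- A proper Mathon arc of degree `d`: a Mathon arc that is not of Denniston type. -/
def IsProperMathon (h : ℕ) (K : Set (Pt F)) (d : ℕ) : Prop :=
  IsMathonType F h K d ∧ ¬ IsDennistonType F h K

end MaxArc

namespace MaxArcAux

open Finset

variable {F : Type} [Field F] [Fintype F]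

/-! ### Characteristic two algebra -/

lemma fib_lemma (two0 : (2:F) = 0) {a w k : F} (ha : a ≠ 0) (hak : a * k = w) :
    ∀ s t : F, a*s^2 + w*s = a*t^2 + w*t ↔ s = t ∨ s = t + k := by
  intro s t
  constructor
  · intro hst
    have key : (s+t)*(a*(s+t)+w) = 0 := by
      linear_combination hst + (a*t^2 + a*s*t + w*t)*two0
    rcases mul_eq_zero.mp key with h1 | h2
    · left; linear_combination h1 - t*two0
    · right
      have h3 : a*(s + t + k) = 0 := by linear_combination h2 + hak
      have h4 : s + t + k = 0 := by
        rcases mul_eq_zero.mp h3 with h | h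
        · exact absurd h ha
        · exact h
      linear_combination h4 - (t + k)*two0
  · rintro (rfl | rfl)
    · rfl
    · linear_combination (a*t*k + w*k)*two0 + k*hak

/-- A set closed under translation by `k` has twice as many elements as its image
under the 2-to-1 map `t ↦ a t² + w t`. -/
lemma pair_count (two0 : (2:F) = 0) {a w k : F} (ha : a ≠ 0) (hak : a * k = w)
    (hk : k ≠ 0) (T : Finset F) (hT : ∀ t ∈ T, t + k ∈ T) :
    T.card = 2 * (T.image (fun t => a*t^2 + w*t)).card := by
  classical
  set f : F → F := fun t => a*t^2 + w*t with hfdef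
  have hfib := fib_lemma two0 ha hak
  have hmaps : ∀ t ∈ T, f t ∈ T.image f := fun t ht => Finset.mem_image_of_mem f ht
  rw [Finset.card_eq_sum_card_fiberwise hmaps]
  have hfib2 : ∀ y ∈ T.image f, (T.filter fun s => f s = y).card = 2 := by
    intro y hy
    obtain ⟨t, ht, rfl⟩ := Finset.mem_image.mp hy
    have hflt : T.filter (fun s => f s = f t) = {t, t + k} := by
      ext s
      simp only [Finset.mem_filter, Finset.mem_insert, Finset.mem_singleton]
      constructor
      · rintro ⟨_, he⟩
        exact (hfib s t).mp he
      · rintro (rfl | rfl)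
        · exact ⟨ht, rfl⟩
        · exact ⟨hT t ht, (hfib _ _).mpr (Or.inr rfl)⟩
    rw [hflt, Finset.card_insert_of_notMem (by
      simp only [Finset.mem_singleton]
      intro hcon
      exact hk (by linear_combination -hcon)), Finset.card_singleton]
  rw [Finset.sum_congr rfl hfib2, Finset.sum_const, smul_eq_mul, mul_comm]

/-- The image of `t ↦ a t² + w t` is an index-two subgroup: the sum of two
non-values is a value. -/
lemma index_two (two0 : (2:F) = 0) {a w k : F} (ha : a ≠ 0) (hak : a * k = w)
    (hk : k ≠ 0) {x y : F} (hx : ∀ t : F, a*t^2 + w*t ≠ x)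
    (hy : ∀ t : F, a*t^2 + w*t ≠ y) : ∃ t : F, a*t^2 + w*t = x + y := by
  classical
  set f : F → F := fun t => a*t^2 + w*t with hfdef
  set Hf : Finset F := Finset.univ.image f with hHf
  have hcard : (Finset.univ : Finset F).card = 2 * Hf.card :=
    pair_count two0 ha hak hk _ (fun t _ => Finset.mem_univ _)
  set Hf' : Finset F := Hf.image (fun z => x + z) with hHf'
  have hadd : ∀ s t : F, f s + f t = f (s + t) := by
    intro s t
    simp only [hfdef]
    linear_combination (-(a*s*t))*two0
  have hdisj : Disjoint Hf Hf' := by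
    rw [Finset.disjoint_left]
    intro z hz hz'
    obtain ⟨t, _, rfl⟩ := Finset.mem_image.mp hz
    obtain ⟨z', hz'', hze⟩ := Finset.mem_image.mp hz'
    obtain ⟨s, _, rfl⟩ := Finset.mem_image.mp hz''
    have : f (t + s) = x := by
      rw [← hadd]
      linear_combination -hze + (f s)*two0
    exact hx _ this
  have hcard' : Hf'.card = Hf.card :=
    Finset.card_image_of_injective _ (add_right_injective x)
  have huniv : Hf ∪ Hf' = Finset.univ := by
    apply Finset.eq_univ_of_card
    rw [Finset.card_union_of_disjoint hdisj, hcard', ← Finset.card_univ, hcard]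
    ring
  have hyu : y ∈ Hf ∪ Hf' := huniv ▸ Finset.mem_univ y
  rcases Finset.mem_union.mp hyu with hyH | hyH'
  · obtain ⟨t, _, hft⟩ := Finset.mem_image.mp hyH
    exact absurd hft (hy t)
  · obtain ⟨z, hz, hze⟩ := Finset.mem_image.mp hyH'
    obtain ⟨s, _, rfl⟩ := Finset.mem_image.mp hz
    refine ⟨s, ?_⟩
    show f s = x + y
    linear_combination hze - x*two0

/-- Counting `{t : a t² + w t + c ∈ A}` when `w ≠ 0` and `a t² + w t + c` never
vanishes: the count is `0` or `|A|`. -/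
lemma count_ne (two0 : (2:F) = 0) {a w c : F} (ha : a ≠ 0) (hw : w ≠ 0)
    (hc : ∀ t : F, a*t^2 + w*t + c ≠ 0) (Af : Finset F)
    (hAadd : ∀ x ∈ Af, ∀ y ∈ Af, x + y ∈ Af) :
    (Finset.univ.filter (fun t : F => a*t^2 + w*t + c ∈ Af)).card = 0 ∨
    (Finset.univ.filter (fun t : F => a*t^2 + w*t + c ∈ Af)).card = Af.card := by
  classical
  set f : F → F := fun t => a*t^2 + w*t with hfdef
  set k : F := w / a with hkdef
  have hak : a * k = w := by rw [hkdef]; field_simp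
  have hk : k ≠ 0 := by
    intro h0
    rw [h0, mul_zero] at hak
    exact hw hak.symm
  have hfib := fib_lemma two0 ha hak
  have hadd : ∀ s t : F, f s + f t = f (s + t) := by
    intro s t
    simp only [hfdef]
    linear_combination (-(a*s*t))*two0
  have hcf : ∀ t : F, f t ≠ c := by
    intro t h0
    simp only [hfdef] at h0
    exact hc t (by linear_combination h0 + c*two0)
  set Sf : Finset F := Finset.univ.filter (fun t : F => a*t^2 + w*t + c ∈ Af) with hSf
  by_cases hS : Sf = ∅
  · left; rw [hS, Finset.card_empty]
  · right
    obtain ⟨t0, ht0⟩ := Finset.nonempty_of_ne_empty hS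
    have ht0A : f t0 + c ∈ Af := (Finset.mem_filter.mp ht0).2
    set a0 : F := f t0 + c with ha0def
    have ha0H : ∀ t : F, f t ≠ a0 := by
      intro t h0
      apply hcf (t + t0)
      rw [← hadd]
      linear_combination h0 + (f t0)*two0
    -- Sf is closed under translation by k
    have hScl : ∀ t ∈ Sf, t + k ∈ Sf := by
      intro t ht
      rw [hSf, Finset.mem_filter] at ht ⊢
      refine ⟨Finset.mem_univ _, ?_⟩
      have : a*(t+k)^2 + w*(t+k) = a*t^2 + w*t := ((fib_lemma two0 ha hak _ _).mpr (Or.inr rfl))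
      rw [this]
      exact ht.2
    have hpair : Sf.card = 2 * (Sf.image f).card := pair_count two0 ha hak hk Sf hScl
    -- the shifted image equals the set of "reachable" elements of Af
    set A0 : Finset F := Af.filter (fun z => ∃ s : F, f s = z) with hA0
    set A1 : Finset F := Af.filter (fun z => ¬ ∃ s : F, f s = z) with hA1
    have himg : (Sf.image f).image (fun y => y + (c + a0)) = A0 := by
      ext z
      simp only [Finset.mem_image, hA0, Finset.mem_filter, Finset.mem_univ, true_and]
      constructor
      · rintro ⟨y, hy, rfl⟩
        obtain ⟨t, ht, rfl⟩ := hy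
        have htA : f t + c ∈ Af := (Finset.mem_filter.mp ht).2
        constructor
        · have : f t + (c + a0) = (f t + c) + a0 := by ring
          rw [this]
          exact hAadd _ htA _ ht0A
        · refine ⟨t + t0, ?_⟩
          rw [← hadd]
          linear_combination -ha0def - c*two0
      · rintro ⟨hzA, s, rfl⟩
        refine ⟨f (s + t0), ⟨s + t0, ?_, rfl⟩, ?_⟩
        · rw [hSf, Finset.mem_filter]
          refine ⟨Finset.mem_univ _, ?_⟩
          show f (s + t0) + c ∈ Af
          rw [← hadd]
          have : f s + f t0 + c = f s + a0 := by rw [ha0def]; ring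
          rw [this]
          exact hAadd _ hzA _ ht0A
        · rw [← hadd]
          linear_combination -ha0def + a0*two0
    have hC0 : (Sf.image f).card = A0.card := by
      rw [← himg]
      exact (Finset.card_image_of_injective _ (add_left_injective (c + a0))).symm
    have ha0nr : ∀ t : F, f t ≠ a0 := ha0H
    have hA10 : A1.card = A0.card := by
      apply Finset.card_nbij' (fun z => z + a0) (fun z => z + a0)
      · intro z hz
        rw [hA1, Finset.mem_coe, Finset.mem_filter] at hz
        obtain ⟨hzA, hznr⟩ := hz
        rw [hA0, Finset.mem_coe, Finset.mem_filter]
        push_neg at hznr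
        obtain ⟨t, ht⟩ := index_two two0 ha hak hk hznr ha0nr
        exact ⟨hAadd _ hzA _ ht0A, t, ht⟩
      · intro z hz
        rw [hA0, Finset.mem_coe, Finset.mem_filter] at hz
        obtain ⟨hzA, s, hs⟩ := hz
        rw [hA1, Finset.mem_coe, Finset.mem_filter]
        refine ⟨hAadd _ hzA _ ht0A, ?_⟩
        rintro ⟨t, ht⟩
        apply ha0nr (t + s)
        rw [← hadd, ht, ← hs]
        linear_combination (f s)*two0
      · intro z _
        linear_combination a0*two0
      · intro z _
        linear_combination a0*two0
    have hAsplit : A0.card + A1.card = Af.card := by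
      rw [hA0, hA1]
      exact Finset.card_filter_add_card_filter_not _
    rw [hpair, hC0]
    omega

/-- Counting `{t : a t² + c ∈ A}` (case `w = 0`): the map is a bijection,
so the count is `|A|`. -/
lemma count_zero (two0 : (2:F) = 0) {a w c : F} (ha : a ≠ 0) (hw : w = 0)
    (Af : Finset F) :
    (Finset.univ.filter (fun t : F => a*t^2 + w*t + c ∈ Af)).card = Af.card := by
  classical
  subst hw
  set β : F → F := fun t => a*t^2 + 0*t + c with hβ
  have hinj : Function.Injective β := by
    intro s t hst
    simp only [hβ] at hst
    have hsq : a * (s + t)^2 = 0 := by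
      linear_combination hst + (a*t^2 + a*s*t)*two0
    have : s + t = 0 := by
      have h2 := (mul_eq_zero.mp hsq).resolve_left ha
      exact pow_eq_zero_iff (n := 2) (by norm_num) |>.mp h2
    linear_combination this - t*two0
  have hsurj : Function.Surjective β := Finite.surjective_of_injective hinj
  apply Finset.card_bij (fun t _ => β t)
  · intro t ht
    exact (Finset.mem_filter.mp ht).2
  · intro s hs t ht hst
    exact hinj hst
  · intro z hz
    obtain ⟨t, rfl⟩ := hsurj z
    exact ⟨t, Finset.mem_filter.mpr ⟨Finset.mem_univ _, hz⟩, rfl⟩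

/-! ### Trace and anisotropy -/

lemma pow2pow (two0 : (2:F) = 0) (n : ℕ) (x y : F) :
    (x + y)^(2^n) = x^(2^n) + y^(2^n) := by
  induction n with
  | zero => simp
  | succ n ih =>
    have h1 : 2^(n+1) = 2^n * 2 := pow_succ 2 n
    rw [h1, pow_mul, pow_mul, pow_mul, ih]
    linear_combination (x^(2^n) * y^(2^n))*two0

lemma tr_no_root (h : ℕ) (hcard : Fintype.card F = 2 ^ h) (two0 : (2:F) = 0)
    {α : F} (htr : MaxArc.tr F h α = 1) : ∀ t : F, t^2 + t ≠ α := by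
  intro t heq
  have key : ∀ i : ℕ, (t^2 + t)^(2^i) = t^(2^(i+1)) + t^(2^i) := by
    intro i
    rw [pow2pow two0]
    congr 1
    rw [← pow_mul]
    congr 1
    ring
  have e0 : (1:F) = (∑ i ∈ Finset.range h, t^(2^(i+1))) + ∑ i ∈ Finset.range h, t^(2^i) := by
    rw [← htr, ← heq]
    unfold MaxArc.tr
    rw [← Finset.sum_add_distrib]
    exact Finset.sum_congr rfl fun i _ => key i
  have q1 := Finset.sum_range_succ (fun i => t^(2^i)) h
  have q2 := Finset.sum_range_succ' (fun i => t^(2^i)) h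
  have hq : t^(2^h) = t := by
    conv_rhs => rw [← FiniteField.pow_card t]
    rw [hcard]
  simp only [pow_zero, pow_one] at q2
  rw [q1] at q2
  rw [hq] at q2
  -- q2 : (∑ range h, t^(2^i)) + t = (∑ i in range h, t^(2^(i+1))) + t
  have e2 : (∑ i ∈ Finset.range h, t^(2^(i+1))) = ∑ i ∈ Finset.range h, t^(2^i) := by
    exact (add_right_cancel q2).symm
  exact (one_ne_zero : (1:F) ≠ 0) (by
    linear_combination e0 + e2 + (∑ i ∈ Finset.range h, t^(2^i))*two0)

lemma aniso (two0 : (2:F) = 0) {α : F} (hnr : ∀ t : F, t^2 + t ≠ α)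
    (hα : α ≠ 0) : ∀ x y : F, α*x^2 + x*y + y^2 = 0 → x = 0 ∧ y = 0 := by
  intro x y hxy
  by_cases hy : y = 0
  · subst hy
    have h1 : α * x^2 = 0 := by linear_combination hxy
    rcases mul_eq_zero.mp h1 with h | h
    · exact absurd h hα
    · exact ⟨pow_eq_zero_iff (two_ne_zero) |>.mp h, rfl⟩
  · exfalso
    apply hnr (α * x / y)
    set v := α * x / y with hv
    have hvy : v * y = α * x := by
      rw [hv]; field_simp
    have h2 : y^2 * (v^2 + v + α) = 0 := by
      linear_combination α*hxy + (v*y + α*x + y)*hvy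
    have h3 : v^2 + v + α = 0 :=
      (mul_eq_zero.mp h2).resolve_left (pow_ne_zero 2 hy)
    linear_combination h3 - α*two0

/-! ### Projective membership lemmas -/

lemma mem_conic_mk {a b l : F} {vv : Fin 3 → F} (hv : vv ≠ 0) :
    Projectivization.mk F vv hv ∈ MaxArc.conicSet F a b l ↔
      a * vv 0 ^ 2 + vv 0 * vv 1 + b * vv 1 ^ 2 + l * vv 2 ^ 2 = 0 := by
  obtain ⟨c, hc⟩ := Projectivization.exists_smul_eq_mk_rep F vv hv
  have hrep : ∀ i, (Projectivization.mk F vv hv).rep i = (c : F) * vv i := by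
    intro i; rw [← hc]; simp [Units.smul_def]
  show (_ = 0) ↔ _
  simp only [MaxArc.conicSet, Set.mem_setOf_eq, hrep]
  constructor
  · intro hq
    have h2 : (c:F)^2 * (a * vv 0 ^ 2 + vv 0 * vv 1 + b * vv 1 ^ 2 + l * vv 2 ^ 2) = 0 := by
      linear_combination hq
    exact (mul_eq_zero.mp h2).resolve_left (pow_ne_zero 2 c.ne_zero)
  · intro hq
    linear_combination (c:F)^2 * hq

lemma mem_line_mk {u v w : F} {vv : Fin 3 → F} (hv : vv ≠ 0) :
    Projectivization.mk F vv hv ∈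
        {P : MaxArc.Pt F | u * P.rep 0 + v * P.rep 1 + w * P.rep 2 = 0} ↔
      u * vv 0 + v * vv 1 + w * vv 2 = 0 := by
  obtain ⟨c, hc⟩ := Projectivization.exists_smul_eq_mk_rep F vv hv
  have hrep : ∀ i, (Projectivization.mk F vv hv).rep i = (c : F) * vv i := by
    intro i; rw [← hc]; simp [Units.smul_def]
  simp only [Set.mem_setOf_eq, hrep]
  constructor
  · intro hq
    have h2 : (c:F) * (u * vv 0 + v * vv 1 + w * vv 2) = 0 := by
      linear_combination hq
    exact (mul_eq_zero.mp h2).resolve_left c.ne_zero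
  · intro hq
    linear_combination (c:F) * hq

lemma mk_eq_pt001_iff {vv : Fin 3 → F} (hv : vv ≠ 0) :
    Projectivization.mk F vv hv = MaxArc.pt001 F ↔ vv 0 = 0 ∧ vv 1 = 0 := by
  unfold MaxArc.pt001
  rw [Projectivization.mk_eq_mk_iff]
  constructor
  · rintro ⟨d, hd⟩
    have h0 := congrFun hd 0
    have h1 := congrFun hd 1
    simp [Units.smul_def] at h0 h1
    exact ⟨h0.symm, h1.symm⟩
  · rintro ⟨h0, h1⟩
    have h2 : vv 2 ≠ 0 := by
      intro h2; apply hv; funext i; fin_cases i <;> simp [h0, h1, h2]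
    refine ⟨Units.mk0 (vv 2) h2, ?_⟩
    funext i
    fin_cases i <;> simp [Units.smul_def, h0, h1]

lemma memK_mk (two0 : (2:F) = 0) {α : F}
    (haniso : ∀ x y : F, α*x^2 + x*y + y^2 = 0 → x = 0 ∧ y = 0)
    (A : AddSubgroup F) {vv : Fin 3 → F} (hv : vv ≠ 0) :
    Projectivization.mk F vv hv ∈ MaxArc.dennistonSet F α (A : Set F) ↔
      (vv 2 ≠ 0 ∧ ∃ μ ∈ A, α * vv 0^2 + vv 0 * vv 1 + vv 1^2 = μ * vv 2^2) := by
  unfold MaxArc.dennistonSet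
  rw [Set.mem_union, Set.mem_singleton_iff, Set.mem_iUnion₂]
  constructor
  · rintro (hpt | ⟨l, hl, hc⟩)
    · obtain ⟨h0, h1⟩ := (mk_eq_pt001_iff hv).mp hpt
      have h2 : vv 2 ≠ 0 := by
        intro h2; apply hv; funext i; fin_cases i <;> simp [h0, h1, h2]
      exact ⟨h2, 0, A.zero_mem, by rw [h0, h1]; ring⟩
    · obtain ⟨hlA, hl0⟩ := hl
      rw [mem_conic_mk hv] at hc
      have h2 : vv 2 ≠ 0 := by
        intro h2
        obtain ⟨h0, h1⟩ := haniso (vv 0) (vv 1) (by linear_combination hc - l*(vv 2)*h2)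
        apply hv; funext i; fin_cases i <;> simp [h0, h1, h2]
      refine ⟨h2, l, hlA, ?_⟩
      linear_combination hc - l*(vv 2)^2*two0
  · rintro ⟨h2, μ, hμ, hQ⟩
    by_cases hμ0 : μ = 0
    · left
      rw [mk_eq_pt001_iff hv]
      refine haniso _ _ ?_
      rw [hμ0] at hQ
      linear_combination hQ
    · right
      refine ⟨μ, ⟨hμ, by simpa using hμ0⟩, ?_⟩
      rw [mem_conic_mk hv]
      linear_combination hQ + μ*(vv 2)^2*two0

end MaxArcAux

/-- Denniston's construction: for `Tr(α) = 1` and an additive subgroup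
`A` of `GF(q)` with `|A| ≥ 2`, the set `{(0,0,1)} ∪ ⋃_{λ ∈ A \ {0}} F_{α,1,λ}` is a
maximal arc of degree `|A|` in `PG(2,q)`. -/
theorem statement2 {F : Type} [Field F] [Fintype F] (h : ℕ)
    (hcard : Fintype.card F = 2 ^ h)
    (α : F) (htr : MaxArc.tr F h α = 1)
    (A : AddSubgroup F) (hA : 2 ≤ Nat.card A) :
    MaxArc.IsMaximalArc F (MaxArc.dennistonSet F α (A : Set F)) (Nat.card A) := by
  classical
  have hh : h ≠ 0 := by
    intro h0
    rw [h0, pow_zero] at hcard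
    have := Fintype.one_lt_card (α := F)
    omega
  have two0 : (2:F) = 0 := by
    have h1 : ((Fintype.card F : ℕ) : F) = 0 := FiniteField.cast_card_eq_zero F
    rw [hcard] at h1
    push_cast at h1
    exact pow_eq_zero_iff hh |>.mp h1
  have hα : α ≠ 0 := by
    intro h0
    rw [h0] at htr
    unfold MaxArc.tr at htr
    rw [Finset.sum_eq_zero (fun i _ => zero_pow (pow_ne_zero i (by norm_num)))] at htr
    exact (one_ne_zero : (1:F) ≠ 0) htr.symm
  have hnr := MaxArcAux.tr_no_root h hcard two0 htr
  have haniso := MaxArcAux.aniso two0 hnr hα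
  refine ⟨⟨MaxArc.pt001 F, Set.mem_union_left _ rfl⟩, ?_, ?_⟩
  · intro hU
    have hnz : (![1,0,0] : Fin 3 → F) ≠ 0 := by
      intro h0
      have := congrFun h0 0
      simp at this
    have hmem : Projectivization.mk F ![1,0,0] hnz ∈ MaxArc.dennistonSet F α (A : Set F) := by
      rw [hU]; trivial
    rw [MaxArcAux.memK_mk two0 haniso A hnz] at hmem
    exact hmem.1 (by simp)
  · intro L hL
    obtain ⟨u, v, w, hnz3, rfl⟩ := hL
    by_cases huv : u = 0 ∧ v = 0
    · left
      obtain ⟨hu0, hv0⟩ := huv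
      have hw0 : w ≠ 0 := fun h0 => hnz3 ⟨hu0, hv0, h0⟩
      have hempty : MaxArc.dennistonSet F α (A:Set F) ∩
          {P | u * P.rep 0 + v * P.rep 1 + w * P.rep 2 = 0} = ∅ := by
        rw [Set.eq_empty_iff_forall_notMem]
        rintro P ⟨hPK, hPL⟩
        simp only [Set.mem_setOf_eq, hu0, hv0, zero_mul, zero_add] at hPL
        have hz := ((MaxArcAux.memK_mk two0 haniso A P.rep_nonzero).mp
          (by rwa [Projectivization.mk_rep])).1
        exact hz ((mul_eq_zero.mp hPL).resolve_left hw0)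
      rw [hempty, Set.ncard_empty]
    · obtain ⟨x0, y0, hp0⟩ : ∃ x0 y0 : F, u * x0 + v * y0 = w := by
        rcases not_and_or.mp huv with hu | hv
        · exact ⟨w / u, 0, by field_simp; ring⟩
        · exact ⟨0, w / v, by field_simp; ring⟩
      set a : F := α * v^2 + v*u + u^2 with hadef
      have ha : a ≠ 0 := by
        intro h0
        obtain ⟨h1, h2⟩ := haniso v u (by linear_combination h0 - hadef)
        exact huv ⟨h2, h1⟩
      set c : F := α * x0^2 + x0*y0 + y0^2 with hcdef
      have hvecne : ∀ t : F, (![x0 + t*v, y0 + t*u, 1] : Fin 3 → F) ≠ 0 := by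
        intro t h0
        have := congrFun h0 2
        simp at this
      set e : F → MaxArc.Pt F :=
        fun t => Projectivization.mk F ![x0 + t*v, y0 + t*u, 1] (hvecne t) with he
      have hφ : ∀ t : F, α*(x0 + t*v)^2 + (x0 + t*v)*(y0 + t*u) + (y0 + t*u)^2
          = a*t^2 + w*t + c := by
        intro t
        linear_combination t*hp0 + (α*x0*t*v + y0*t*u)*two0 - t^2*hadef - hcdef
      have heinj : Function.Injective e := by
        intro s t hst
        rw [he, Projectivization.mk_eq_mk_iff] at hst
        obtain ⟨d, hd⟩ := hst
        have h2 : (d:F) = 1 := by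
          have := congrFun hd 2
          simpa [Units.smul_def] using this
        have h0 := congrFun hd 0
        have h1 := congrFun hd 1
        simp only [Pi.smul_apply, Units.smul_def, smul_eq_mul, h2, one_mul,
          Matrix.cons_val_zero, Matrix.cons_val_one, Matrix.head_cons] at h0 h1
        rcases not_and_or.mp huv with hu | hv
        · have h3 : t * u = s * u := by linear_combination h1
          exact (mul_right_cancel₀ hu h3).symm
        · have h3 : t * v = s * v := by linear_combination h0
          exact (mul_right_cancel₀ hv h3).symm
      have hsolve : ∀ x y : F, u*x + v*y + w = 0 →
          ∃ t : F, x0 + t*v = x ∧ y0 + t*u = y := by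
        intro x y hline
        rcases not_and_or.mp huv with hu | hv
        · refine ⟨(y + y0)/u, ?_, ?_⟩
          · have hdiv : (y + y0)/u*u = y + y0 := div_mul_cancel₀ _ hu
            apply mul_left_cancel₀ hu
            linear_combination v*hdiv + hp0 - hline + (v*y + w)*two0
          · have hdiv : (y + y0)/u*u = y + y0 := div_mul_cancel₀ _ hu
            linear_combination hdiv + y0*two0
        · refine ⟨(x + x0)/v, ?_, ?_⟩
          · have hdiv : (x + x0)/v*v = x + x0 := div_mul_cancel₀ _ hv
            linear_combination hdiv + x0*two0
          · have hdiv : (x + x0)/v*v = x + x0 := div_mul_cancel₀ _ hv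
            apply mul_left_cancel₀ hv
            linear_combination u*hdiv + hp0 - hline + (u*x + w)*two0
      set Af : Finset F := (A : Set F).toFinset with hAfdef
      have hAfmem : ∀ x : F, x ∈ Af ↔ x ∈ A := by
        intro x; rw [hAfdef]; exact Set.mem_toFinset
      set Sf : Finset F := Finset.univ.filter (fun t : F => a*t^2 + w*t + c ∈ Af) with hSfdef
      have hKL : MaxArc.dennistonSet F α (A:Set F) ∩
          {P | u * P.rep 0 + v * P.rep 1 + w * P.rep 2 = 0} = e '' ↑Sf := by
        ext P
        constructor
        · rintro ⟨hPK, hPL⟩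
          obtain ⟨hz, μ, hμ, hQ⟩ := (MaxArcAux.memK_mk two0 haniso A P.rep_nonzero).mp
            (by rwa [Projectivization.mk_rep])
          simp only [Set.mem_setOf_eq] at hPL
          have hinv : P.rep 2 * (P.rep 2)⁻¹ = 1 := mul_inv_cancel₀ hz
          have hline2 : u*(P.rep 0*(P.rep 2)⁻¹) + v*(P.rep 1*(P.rep 2)⁻¹) + w = 0 := by
            linear_combination (P.rep 2)⁻¹*hPL - w*hinv
          obtain ⟨t, hE1, hE2⟩ := hsolve _ _ hline2
          refine ⟨t, ?_, ?_⟩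
          · refine Finset.mem_coe.mpr (Finset.mem_filter.mpr ⟨Finset.mem_univ _, ?_⟩)
            rw [hAfmem]
            have hval : a*t^2 + w*t + c = μ := by
              rw [← hφ t, hE1, hE2]
              linear_combination ((P.rep 2)⁻¹)^2*hQ + μ*(P.rep 2*(P.rep 2)⁻¹ + 1)*hinv
            rw [hval]; exact hμ
          · rw [he]
            conv_rhs => rw [← Projectivization.mk_rep P]
            rw [Projectivization.mk_eq_mk_iff]
            refine ⟨Units.mk0 (P.rep 2)⁻¹ (inv_ne_zero hz), ?_⟩
            funext i
            fin_cases i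
            · show (P.rep 2)⁻¹ * P.rep 0 = x0 + t * v
              linear_combination -hE1
            · show (P.rep 2)⁻¹ * P.rep 1 = y0 + t * u
              linear_combination -hE2
            · show (P.rep 2)⁻¹ * P.rep 2 = 1
              linear_combination hinv
        · rintro ⟨t, htS, rfl⟩
          have htA : a*t^2 + w*t + c ∈ A := by
            have hm := Finset.mem_filter.mp (Finset.mem_coe.mp htS)
            exact (hAfmem _).mp hm.2
          constructor
          · rw [he, MaxArcAux.memK_mk two0 haniso A (hvecne t)]
            simp only [Matrix.cons_val_zero, Matrix.cons_val_one, Matrix.head_cons,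
              Matrix.cons_val_two, Matrix.tail_cons]
            refine ⟨one_ne_zero, a*t^2 + w*t + c, htA, ?_⟩
            rw [one_pow, mul_one]
            exact hφ t
          · rw [he, MaxArcAux.mem_line_mk (hvecne t)]
            simp only [Matrix.cons_val_zero, Matrix.cons_val_one, Matrix.head_cons,
              Matrix.cons_val_two, Matrix.tail_cons]
            linear_combination hp0 + (t*u*v + w)*two0
      rw [hKL, Set.ncard_image_of_injective _ heinj, Set.ncard_coe_finset]
      have hAcard : Nat.card A = Af.card := by
        rw [hAfdef, ← Set.ncard_eq_toFinset_card', ← Nat.card_coe_set_eq,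
          SetLike.coe_sort_coe]
      rw [hAcard]
      by_cases hw0 : w = 0
      · right
        rw [hSfdef]
        exact MaxArcAux.count_zero two0 ha hw0 Af
      · have hcnz : ∀ t : F, a*t^2 + w*t + c ≠ 0 := by
          intro t h0
          rw [← hφ t] at h0
          obtain ⟨hx, hy⟩ := haniso _ _ h0
          apply hw0
          linear_combination -hp0 + u*hx + v*hy - t*u*v*two0
        have hAadd : ∀ x ∈ Af, ∀ y ∈ Af, x + y ∈ Af := by
          intro x hx y hy
          rw [hAfmem] at hx hy ⊢
          exact A.add_mem hx hy
        rw [hSfdef]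
        exact MaxArcAux.count_ne two0 ha hw0 hcnz Af hAadd
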